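/- For t in (0,1), the hyperbolic midpoint of the geodesic segment joining tω and tω² (with ω = e^{2πi/3}) lies on the negative real axis at the point (√(1+t²+t⁴) − 1 − t²)/t. -/

import Mathlib

open Complex

/-- The hyperbolic metric on the unit disk:
ρ(z,w) = log((1+|(z−w)/(1−conj(w)z)|)/(1−|(z−w)/(1−conj(w)z)|)). -/
noncomputable def hypDist (z w : ℂ) : ℝ :=
  Real.log ((1 + ‖(z - w) / (1 - (starRingEnd ℂ) w * z)‖) /
    (1 - ‖(z - w) / (1 - (starRingEnd ℂ) w * z)‖))

/-- For t ∈ (0,1) and ω = e^{2πi/3}, the hyperbolic midpoint of the geodesic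
segment joining tω and tω² lies on the negative real axis at (√(1+t²+t⁴) − 1 − t²)/t:
it is a negative real number, lies on the geodesic (the triangle inequality is an
equality), and is hyperbolically equidistant from the two endpoints. -/
theorem hyperbolic_midpoint (t : ℝ) (ht : t ∈ Set.Ioo (0 : ℝ) 1) :
    (Real.sqrt (1 + t ^ 2 + t ^ 4) - 1 - t ^ 2) / t < 0 ∧
    hypDist ((t : ℂ) * Complex.exp (2 * Real.pi * Complex.I / 3))
        (((Real.sqrt (1 + t ^ 2 + t ^ 4) - 1 - t ^ 2) / t : ℝ) : ℂ) =
      hypDist (((Real.sqrt (1 + t ^ 2 + t ^ 4) - 1 - t ^ 2) / t : ℝ) : ℂ)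
        ((t : ℂ) * Complex.exp (2 * Real.pi * Complex.I / 3) ^ 2) ∧
    hypDist ((t : ℂ) * Complex.exp (2 * Real.pi * Complex.I / 3))
        (((Real.sqrt (1 + t ^ 2 + t ^ 4) - 1 - t ^ 2) / t : ℝ) : ℂ) +
      hypDist (((Real.sqrt (1 + t ^ 2 + t ^ 4) - 1 - t ^ 2) / t : ℝ) : ℂ)
        ((t : ℂ) * Complex.exp (2 * Real.pi * Complex.I / 3) ^ 2) =
      hypDist ((t : ℂ) * Complex.exp (2 * Real.pi * Complex.I / 3))
        ((t : ℂ) * Complex.exp (2 * Real.pi * Complex.I / 3) ^ 2) := by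
  obtain ⟨ht0, ht1⟩ := ht
  have h3 : Real.sqrt 3 ^ 2 = 3 := Real.sq_sqrt (by norm_num)
  set s : ℝ := Real.sqrt (1 + t ^ 2 + t ^ 4) with hs_def
  have hs2 : s ^ 2 = 1 + t ^ 2 + t ^ 4 := Real.sq_sqrt (by positivity)
  have hs_pos : 0 < s := Real.sqrt_pos.mpr (by positivity)
  have hs_lt : s < 1 + t ^ 2 := by nlinarith
  have hs_gt : 1 + t ^ 2 - t < s := by nlinarith
  set u : ℝ := s - 1 - t ^ 2 with hu_def
  set m : ℝ := u / t with hm_def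
  have hmt : m * t = u := div_mul_cancel₀ _ ht0.ne'
  have hm_neg : m < 0 := div_neg_of_neg_of_pos (by rw [hu_def]; linarith) ht0
  have hm_gt : -1 < m := by
    rw [hm_def, lt_div_iff₀ ht0, hu_def]; linarith
  clear_value s u m
  -- the primitive cube root of unity
  set E : ℂ := Complex.exp (2 * (Real.pi : ℂ) * Complex.I / 3) with hE_def
  have he : E = (-1 + (Real.sqrt 3 : ℝ) * Complex.I) / 2 := by
    have harg : (2 * (Real.pi : ℂ) * Complex.I / 3) = ((2 * Real.pi / 3 : ℝ) : ℂ) * Complex.I := by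
      push_cast; ring
    have hc : Real.cos (2 * Real.pi / 3) = -(1 / 2) := by
      have h : (2 * Real.pi / 3) = Real.pi - Real.pi / 3 := by ring
      rw [h, Real.cos_pi_sub, Real.cos_pi_div_three]
    have hsn : Real.sin (2 * Real.pi / 3) = Real.sqrt 3 / 2 := by
      have h : (2 * Real.pi / 3) = Real.pi - Real.pi / 3 := by ring
      rw [h, Real.sin_pi_sub, Real.sin_pi_div_three]
    rw [hE_def, harg, Complex.exp_mul_I, ← Complex.ofReal_cos, ← Complex.ofReal_sin, hc, hsn]
    push_cast; ring
  have h3c : ((Real.sqrt 3 : ℝ) : ℂ) * ((Real.sqrt 3 : ℝ) : ℂ) = 3 := by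
    norm_cast; nlinarith [h3]
  have he2 : E ^ 2 = (-1 - (Real.sqrt 3 : ℝ) * Complex.I) / 2 := by
    rw [he]
    linear_combination (-1 / 4 : ℂ) * h3c +
      (((Real.sqrt 3 : ℝ) : ℂ) * ((Real.sqrt 3 : ℝ) : ℂ) / 4) * Complex.I_sq
  have hconjE : (starRingEnd ℂ) E = E ^ 2 := by
    rw [he2, he]
    simp [map_div₀, map_ofNat, Complex.conj_I, Complex.conj_ofReal]
    ring
  have hconjE2 : (starRingEnd ℂ) (E ^ 2) = E := by
    rw [he2, he]
    simp [map_div₀, map_ofNat, Complex.conj_I, Complex.conj_ofReal]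
  set a : ℂ := (t : ℂ) * E with ha_def
  set b : ℂ := (t : ℂ) * E ^ 2 with hb_def
  have hconja : (starRingEnd ℂ) a = b := by
    rw [ha_def, hb_def, map_mul, hconjE, Complex.conj_ofReal]
  have hconjb : (starRingEnd ℂ) b = a := by
    rw [ha_def, hb_def, map_mul, hconjE2, Complex.conj_ofReal]
  have hcm : (starRingEnd ℂ) ((m : ℝ) : ℂ) = ((m : ℝ) : ℂ) := Complex.conj_ofReal m
  -- explicit real/imaginary decompositions
  have hnum1 : a - ((m : ℝ) : ℂ) = ((-t / 2 - m : ℝ) : ℂ) + ((t * Real.sqrt 3 / 2 : ℝ) : ℂ) * Complex.I := by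
    rw [ha_def, he]; push_cast; ring
  have hden1 : 1 - (starRingEnd ℂ) ((m : ℝ) : ℂ) * a =
      ((1 + m * t / 2 : ℝ) : ℂ) + ((-(m * t * Real.sqrt 3 / 2) : ℝ) : ℂ) * Complex.I := by
    rw [hcm, ha_def, he]; push_cast; ring
  have hnum3 : a - b = ((0 : ℝ) : ℂ) + ((t * Real.sqrt 3 : ℝ) : ℂ) * Complex.I := by
    rw [ha_def, hb_def, he2, he]; push_cast; ring
  have hden3 : 1 - (starRingEnd ℂ) b * a =
      ((1 + t ^ 2 / 2 : ℝ) : ℂ) + ((t ^ 2 * Real.sqrt 3 / 2 : ℝ) : ℂ) * Complex.I := by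
    rw [hconjb, ha_def, he]; push_cast
    linear_combination ((t : ℂ) ^ 2 / 4) * h3c +
      (-((t : ℂ) ^ 2) * ((Real.sqrt 3 : ℝ) : ℂ) * ((Real.sqrt 3 : ℝ) : ℂ) / 4) * Complex.I_sq
  set A1 : ℝ := ‖(a - ((m : ℝ) : ℂ)) / (1 - (starRingEnd ℂ) ((m : ℝ) : ℂ) * a)‖ with hA1_def
  set A3 : ℝ := ‖(a - b) / (1 - (starRingEnd ℂ) b * a)‖ with hA3_def
  have hu_neg : u < 0 := by rw [hu_def]; linarith
  have hu_gt : -t < u := by rw [hu_def]; linarith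
  have hQpos : 0 < 1 + m * t + (m * t) ^ 2 := by nlinarith [sq_nonneg (2 * (m * t) + 1)]
  have hD1pos : 0 < (1 + m * t / 2) ^ 2 + (-(m * t * Real.sqrt 3 / 2)) ^ 2 := by
    have h1 : 0 < 1 + m * t / 2 := by rw [hmt]; linarith
    nlinarith [sq_nonneg (m * t * Real.sqrt 3 / 2)]
  have hA1sq : A1 ^ 2 = (u ^ 2 + u * t ^ 2 + t ^ 4) / (t ^ 2 * (1 + u + u ^ 2)) := by
    rw [hA1_def, norm_div, div_pow, Complex.sq_norm, Complex.sq_norm, hnum1, hden1,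
      Complex.normSq_add_mul_I, Complex.normSq_add_mul_I, ← hmt]
    rw [div_eq_div_iff hD1pos.ne' (mul_pos (pow_pos ht0 2) hQpos).ne']
    linear_combination (t ^ 4 * (1 + m * t + m ^ 2 * t ^ 2) / 4
      - (m ^ 2 * t ^ 2 + m * t ^ 3 + t ^ 4) * m ^ 2 * t ^ 2 / 4) * h3
  have hA3sq : A3 ^ 2 = 3 * t ^ 2 / s ^ 2 := by
    rw [hA3_def, norm_div, div_pow, Complex.sq_norm, Complex.sq_norm, hnum3, hden3,
      Complex.normSq_add_mul_I, Complex.normSq_add_mul_I]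
    rw [div_eq_div_iff (by positivity) (pow_pos hs_pos 2).ne']
    linear_combination (t ^ 2 * s ^ 2 - 3 * t ^ 6 / 4) * h3 + 3 * t ^ 2 * hs2
  clear_value A1 A3
  have hA1nonneg : 0 ≤ A1 := by rw [hA1_def]; exact norm_nonneg _
  have hA3nonneg : 0 ≤ A3 := by rw [hA3_def]; exact norm_nonneg _
  have hQupos : 0 < 1 + u + u ^ 2 := by clear * - ; nlinarith [sq_nonneg (2 * u + 1)]
  have hu2 : u ^ 2 < t ^ 2 := sq_lt_sq' hu_gt (by linarith)
  have ht2 : t ^ 2 < 1 := by clear * - ht0 ht1; nlinarith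
  have hA1lt : A1 < 1 := by
    have h : A1 ^ 2 < 1 := by
      rw [hA1sq, div_lt_one (mul_pos (pow_pos ht0 2) hQupos)]
      clear * - hu2 ht2
      nlinarith [mul_pos (show (0:ℝ) < t ^ 2 - u ^ 2 by linarith) (show (0:ℝ) < 1 - t ^ 2 by linarith)]
    clear * - h hA1nonneg
    nlinarith
  have hA3lt : A3 < 1 := by
    have h : A3 ^ 2 < 1 := by
      rw [hA3sq, div_lt_one (pow_pos hs_pos 2)]
      clear * - hs2 ht2 ht0
      nlinarith [sq_nonneg (1 - t ^ 2)]
    clear * - h hA3nonneg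
    nlinarith
  have hkeypoly : 4 * (u ^ 2 + u * t ^ 2 + t ^ 4) * (1 + u + u ^ 2) * s ^ 2 =
      3 * ((u ^ 2 + u * t ^ 2 + t ^ 4) + (1 + u + u ^ 2) * t ^ 2) ^ 2 := by
    linear_combination (3 - 9 * s + 5 * s ^ 2 + 5 * s ^ 3 - 8 * s ^ 4 + 4 * s ^ 5 + 9 * t ^ 2
        - 18 * t ^ 2 * s + 11 * t ^ 2 * s ^ 2 + 6 * t ^ 2 * s ^ 3 - 8 * t ^ 2 * s ^ 4
        + 12 * t ^ 4 - 30 * t ^ 4 * s + 11 * t ^ 4 * s ^ 2 + 5 * t ^ 4 * s ^ 3 + 12 * t ^ 6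
        - 18 * t ^ 6 * s + 5 * t ^ 6 * s ^ 2 + 9 * t ^ 8 - 9 * t ^ 8 * s + 3 * t ^ 10
        - 3 * u + 6 * u * s + u * s ^ 2 - 4 * u * s ^ 3 + 4 * u * s ^ 4 - 6 * u * t ^ 2
        + 6 * u * t ^ 2 * s - 2 * u * t ^ 2 * s ^ 2 - 4 * u * t ^ 2 * s ^ 3 - 18 * u * t ^ 4
        + 6 * u * t ^ 4 * s + u * t ^ 4 * s ^ 2 - 6 * u * t ^ 6 + 6 * u * t ^ 6 * s
        - 3 * u * t ^ 8 + 3 * u ^ 2 - 3 * u ^ 2 * s + 4 * u ^ 2 * s ^ 3 - 3 * u ^ 2 * t ^ 2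
        - 6 * u ^ 2 * t ^ 2 * s - 3 * u ^ 2 * t ^ 4 - 3 * u ^ 2 * t ^ 4 * s + 3 * u ^ 2 * t ^ 6
        - 3 * u ^ 3 + 4 * u ^ 3 * s ^ 2 - 6 * u ^ 3 * t ^ 2 - 3 * u ^ 3 * t ^ 4) * hu_def
      + (3 - 12 * s + 17 * s ^ 2 - 12 * s ^ 3 + 4 * s ^ 4 + 9 * t ^ 2 - 24 * t ^ 2 * s
        + 26 * t ^ 2 * s ^ 2 - 12 * t ^ 2 * s ^ 3 + 12 * t ^ 4 - 24 * t ^ 4 * s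
        + 17 * t ^ 4 * s ^ 2 + 9 * t ^ 6 - 12 * t ^ 6 * s + 3 * t ^ 8) * hs2
  have hkey : 2 * A1 = A3 * (1 + A1 ^ 2) := by
    have hsq : (2 * A1) ^ 2 = (A3 * (1 + A1 ^ 2)) ^ 2 := by
      rw [mul_pow, mul_pow, hA1sq, hA3sq]
      field_simp
      linear_combination hkeypoly
    have h2A1 : 0 ≤ 2 * A1 := by linarith
    have hRHS : 0 ≤ A3 * (1 + A1 ^ 2) := mul_nonneg hA3nonneg (by positivity)
    have := congrArg Real.sqrt hsq
    rwa [Real.sqrt_sq h2A1, Real.sqrt_sq hRHS] at this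
  have h1A1 : 0 < 1 - A1 := by linarith
  have h1A3 : 0 < 1 - A3 := by linarith
  have hfrac : (1 + A1) / (1 - A1) * ((1 + A1) / (1 - A1)) = (1 + A3) / (1 - A3) := by
    rw [div_mul_div_comm, div_eq_div_iff (mul_pos h1A1 h1A1).ne' h1A3.ne']
    linear_combination 2 * hkey
  have habs : ‖(a - ((m : ℝ) : ℂ)) / (1 - (starRingEnd ℂ) ((m : ℝ) : ℂ) * a)‖ =
      ‖(((m : ℝ) : ℂ) - b) / (1 - (starRingEnd ℂ) b * ((m : ℝ) : ℂ))‖ := by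
    rw [norm_div, norm_div]
    congr 1
    · have h1 : ((m : ℝ) : ℂ) - b = -((starRingEnd ℂ) (a - ((m : ℝ) : ℂ))) := by
        rw [map_sub, hconja, hcm]; ring
      rw [h1, norm_neg, Complex.norm_conj]
    · rw [hconjb, hcm, mul_comm]
  have heq2 : hypDist a ((m : ℝ) : ℂ) = hypDist ((m : ℝ) : ℂ) b := by
    unfold hypDist
    rw [habs]
  refine ⟨hm_neg, heq2, ?_⟩
  rw [← heq2]
  unfold hypDist
  rw [← hA1_def, ← hA3_def]
  have hX : 0 < (1 + A1) / (1 - A1) := div_pos (by linarith) h1A1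
  rw [← Real.log_mul hX.ne' hX.ne', hfrac]
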